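/- Let G be a linearly ordered cancellative commutative monoid (written multiplicatively) and let α_0, α_1, …, α_m ∈ G (m ≥ 2) be the coefficients of the max-plus polynomial f(x) = max_i (α_i · x^i). Assume every monomial of f is essential, i.e., for each index i there exists x ∈ G with α_i·x^i > α_j·x^j for all j ≠ i. Then α_i · α_j > α_{i-1} · α_{j+1} whenever 1 ≤ i ≤ j ≤ m − 1. -/

import Mathlib

/-- If every monomial of the max-plus polynomial
`f(x) = max_i (α_i · x^i)` (with `0 ≤ i ≤ m`, `m ≥ 2`) is essential — i.e., for each
index `i` there is a point `x` at which `α_i·x^i` strictly dominates all other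
monomials — then `α_i · α_j > α_{i-1} · α_{j+1}` whenever `1 ≤ i ≤ j ≤ m - 1`. -/
theorem stmt5 {G : Type*} [CommMonoid G] [LinearOrder G] [IsOrderedCancelMonoid G]
    (m : ℕ) (hm : 2 ≤ m) (α : ℕ → G)
    (hess : ∀ i ≤ m, ∃ x : G, ∀ j ≤ m, j ≠ i → α j * x ^ j < α i * x ^ i) :
    ∀ i j : ℕ, 1 ≤ i → i ≤ j → j ≤ m - 1 → α (i - 1) * α (j + 1) < α i * α j := by
  -- base lemma: consecutive log-concavity
  have key : ∀ k : ℕ, 1 ≤ k → k ≤ m - 1 → α (k - 1) * α (k + 1) < α k * α k := by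
    intro k hk1 hkm
    obtain ⟨x, hx⟩ := hess k (by omega)
    have h1 : α (k - 1) * x ^ (k - 1) < α k * x ^ k := hx (k - 1) (by omega) (by omega)
    have h2 : α (k + 1) * x ^ (k + 1) < α k * x ^ k := hx (k + 1) (by omega) (by omega)
    have h3 := mul_lt_mul_of_lt_of_lt h1 h2
    have e1 : α (k - 1) * x ^ (k - 1) * (α (k + 1) * x ^ (k + 1))
        = (α (k - 1) * α (k + 1)) * (x ^ (k - 1) * x ^ (k + 1)) := by ac_rfl
    have e2 : α k * x ^ k * (α k * x ^ k)
        = (α k * α k) * (x ^ k * x ^ k) := by ac_rfl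
    have epow : x ^ (k - 1) * x ^ (k + 1) = x ^ k * x ^ k := by
      rw [← pow_add, ← pow_add]
      congr 1
      omega
    rw [e1, e2, epow] at h3
    exact lt_of_mul_lt_mul_right' h3
  have aux : ∀ d : ℕ, ∀ i : ℕ, 1 ≤ i → i + d ≤ m - 1 →
      α (i - 1) * α (i + d + 1) < α i * α (i + d) := by
    intro d
    induction d with
    | zero => intro i hi him; simpa using key i hi (by omega)
    | succ d ih =>
      intro i hi him
      have h1 := ih i hi (by omega)
      have h2 := key (i + d + 1) (by omega) (by omega)
      have h3 := mul_lt_mul_of_lt_of_lt h1 h2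
      have hsub : i + d + 1 - 1 = i + d := by omega
      rw [hsub] at h2 h3
      have e1 : α (i - 1) * α (i + d + 1) * (α (i + d) * α (i + d + 1 + 1))
          = (α (i - 1) * α (i + d + 1 + 1)) * (α (i + d + 1) * α (i + d)) := by ac_rfl
      have e2 : α i * α (i + d) * (α (i + d + 1) * α (i + d + 1))
          = (α i * α (i + d + 1)) * (α (i + d + 1) * α (i + d)) := by ac_rfl
      rw [e1, e2] at h3
      have := lt_of_mul_lt_mul_right' h3
      have eq1 : i + (d + 1) + 1 = i + d + 1 + 1 := by omega
      have eq2 : i + (d + 1) = i + d + 1 := by omega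
      rw [eq1, eq2]
      exact this
  intro i j hi hij hjm
  obtain ⟨d, rfl⟩ : ∃ d, j = i + d := ⟨j - i, by omega⟩
  exact aux d i hi (by omega)
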